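/- The map i : S_QM → L_QM defined by i(𝒜, P)(𝒜') = P if 𝒜 ⊆ 𝒜' and i(𝒜, P)(𝒜') = 0 otherwise (and sending ⊥ to the bottom of L_QM), is an order embedding: i is injective on S_QM modulo the identification of (𝒜, 0) with ⊥, and (𝒜₁, P₁) ≤ (𝒜₂, P₂) in S_QM if and only if i(𝒜₁, P₁) ≤ i(𝒜₂, P₂) in L_QM. -/

import Mathlib

open scoped ENNReal

variable (H : Type*) [NormedAddCommGroup H] [InnerProductSpace ℂ H] [CompleteSpace H]

/-- An orthogonal projection on the Hilbert space `H`, i.e. an element of `L(ℋ)`. -/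
def IsProj (P : H →L[ℂ] H) : Prop := IsIdempotentElem P ∧ IsSelfAdjoint P

/-- The lattice order on projections: `P ≤ Q` iff `P * Q = P`. -/
def pleq (P Q : H →L[ℂ] H) : Prop := P * Q = P

/-- An abelian (commutative) von Neumann algebra. -/
def IsAbelianAlg (A : VonNeumannAlgebra H) : Prop :=
  ∀ x ∈ A, ∀ y ∈ A, x * y = y * x
/-- An element of `S_QM`: a pair `(𝒜, P)` of an abelian von Neumann algebra `𝒜` and a
projection `P ∈ 𝒜`.  Pairs with `proj = 0` all represent the bottom element `⊥`. -/
structure SQM where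
  alg : VonNeumannAlgebra H
  proj : H →L[ℂ] H
  abelian : IsAbelianAlg H alg
  isProj : IsProj H proj
  mem : proj ∈ alg

/-- The order on `S_QM`: `(𝒜₁,P₁) ≤ (𝒜₂,P₂)` iff `P₁ = 0` or (`𝒜₁ ⊇ 𝒜₂` and `P₁ ≤ P₂`). -/
def SQMle (a b : SQM H) : Prop :=
  a.proj = 0 ∨ (b.alg ≤ a.alg ∧ pleq H a.proj b.proj)
/-- The collection `𝔄` of abelian von Neumann subalgebras of `B(H)`. -/
def AbAlg := {A : VonNeumannAlgebra H // IsAbelianAlg H A}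
/-- The lattice `L_QM`: monotone functions `S : 𝔄 → L(ℋ)` with `S(𝒜) ∈ L(𝒜)`. -/
structure LQM where
  S : AbAlg H → (H →L[ℂ] H)
  isProj : ∀ A : AbAlg H, IsProj H (S A)
  mem : ∀ A : AbAlg H, S A ∈ A.1
  mono : ∀ A B : AbAlg H, A.1 ≤ B.1 → pleq H (S A) (S B)

/-- `L_QM` carries the pointwise partial order. -/
instance : PartialOrder (LQM H) where
  le S₁ S₂ := ∀ A : AbAlg H, pleq H (S₁.S A) (S₂.S A)
  le_refl S A := (S.isProj A).1
  le_trans S₁ S₂ S₃ h12 h23 A := by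
    show S₁.S A * S₃.S A = S₁.S A
    calc S₁.S A * S₃.S A = S₁.S A * S₂.S A * S₃.S A := by rw [h12 A]
      _ = S₁.S A * (S₂.S A * S₃.S A) := mul_assoc _ _ _
      _ = S₁.S A := by rw [h23 A, h12 A]
  le_antisymm S₁ S₂ h12 h21 := by
    have hS : S₁.S = S₂.S := funext fun A => by
      have hc : S₁.S A * S₂.S A = S₂.S A * S₁.S A :=
        A.2 _ (S₁.mem A) _ (S₂.mem A)
      calc S₁.S A = S₁.S A * S₂.S A := (h12 A).symm
        _ = S₂.S A * S₁.S A := hc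
        _ = S₂.S A := h21 A
    cases S₁; cases S₂; cases hS; rfl

theorem LQM.le_def (S₁ S₂ : LQM H) :
    S₁ ≤ S₂ ↔ ∀ A : AbAlg H, pleq H (S₁.S A) (S₂.S A) := Iff.rfl
open Classical in
/-- The embedding `i : S_QM → L_QM`, `i(𝒜,P)(𝒜') = P` if `𝒜 ⊆ 𝒜'` and `0` otherwise. -/
noncomputable def iEmb (a : SQM H) : LQM H where
  S B := if a.alg ≤ B.1 then a.proj else 0
  isProj B := by
    show IsProj H (if a.alg ≤ B.1 then a.proj else 0)
    split_ifs
    · exact a.isProj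
    · exact ⟨by simp [IsIdempotentElem], by simp [IsSelfAdjoint]⟩
  mem B := by
    show (if a.alg ≤ B.1 then a.proj else 0) ∈ B.1
    split_ifs with h
    · exact h a.mem
    · exact zero_mem B.1
  mono A B hAB := by
    show (if a.alg ≤ A.1 then a.proj else 0) * (if a.alg ≤ B.1 then a.proj else 0)
        = (if a.alg ≤ A.1 then a.proj else 0)
    split_ifs with h1 h2
    · exact a.isProj.1
    · exact absurd (h1.trans hAB) h2
    · exact zero_mul _
    · exact zero_mul _

/-- The map `i : S_QM → L_QM` is an order embedding: it is injective
modulo the identification of all `(𝒜,0)` with `⊥`, and `(𝒜₁,P₁) ≤ (𝒜₂,P₂)` in `S_QM`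
iff `i(𝒜₁,P₁) ≤ i(𝒜₂,P₂)` in `L_QM`. -/
theorem iEmb_order_embedding :
    (∀ a b : SQM H, iEmb H a = iEmb H b →
      ((a.proj = 0 ∧ b.proj = 0) ∨ (a.alg = b.alg ∧ a.proj = b.proj))) ∧
    (∀ a b : SQM H, SQMle H a b ↔ iEmb H a ≤ iEmb H b) := by
  constructor
  · intro a b h
    have hS : (iEmb H a).S = (iEmb H b).S := congrArg LQM.S h
    have ha := congrFun hS ⟨a.alg, a.abelian⟩
    have hb := congrFun hS ⟨b.alg, b.abelian⟩
    simp only [iEmb, le_refl, if_true] at ha hb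
    by_cases hap : a.proj = 0
    · by_cases hbp : b.proj = 0
      · exact Or.inl ⟨hap, hbp⟩
      · exfalso
        apply hbp
        split_ifs at hb with h1
        · exact hb.symm.trans hap
        · exact hb.symm
    · right
      split_ifs at ha with h1
      · split_ifs at hb with h2
        · exact ⟨le_antisymm h2 h1, ha⟩
        · exact absurd (ha.trans hb.symm) hap
      · exact absurd ha hap
  · intro a b
    constructor
    · intro hle B
      show pleq H ((iEmb H a).S B) ((iEmb H b).S B)
      simp only [iEmb, pleq]
      rcases hle with h0 | ⟨halg, hpq⟩
      · simp [h0]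
      · split_ifs with h1 h2
        · exact hpq
        · exact absurd (halg.trans h1) h2
        · exact zero_mul _
        · exact zero_mul _
    · intro hle
      have h := hle ⟨a.alg, a.abelian⟩
      simp only [iEmb] at h
      rw [if_pos le_rfl] at h
      split_ifs at h with h1
      · exact Or.inr ⟨h1, h⟩
      · simp only [pleq, mul_zero] at h
        exact Or.inl h.symm
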